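/- Let G be a finite simple graph on n ≥ 2 vertices, let γ ≥ 1 be an integer, let α ≥ 1 and ε > 0 be reals, and suppose that every subgraph J of G with at least two vertices satisfies |E(J)| ≤ α·(|V(J)| − 1). Fix a γ-copy orientation of G and suppose every oriented copy is 1-valid, i.e., for every edge e = uv with B_e^u ≥ 1 one has s(u) − s(v) ≤ 1. Then every vertex v satisfies s(v) ≤ (1+ε)·α·γ + log_{1+ε} n. -/

import Mathlib

/-- If a finite simple graph `G` on `n ≥ 2` vertices has every subgraph `J`
(with at least two vertices) satisfying `|E(J)| ≤ α (|V(J)| - 1)`, and a `γ`-copy orientation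
of `G` in which every oriented copy is `1`-valid, then every vertex `v` has load
`s(v) ≤ (1+ε) α γ + log_{1+ε} n`. -/
theorem stmt_0 {V : Type*} [Fintype V] [DecidableEq V]
    (G : SimpleGraph V)
    (hn : 2 ≤ Fintype.card V)
    (γ : ℕ) (hγ : 1 ≤ γ)
    (α ε : ℝ) (hα : 1 ≤ α) (hε : 0 < ε)
    (harb : ∀ S : Finset V, 2 ≤ S.card →
      ({e : Sym2 V | e ∈ G.edgeSet ∧ ∀ x ∈ e, x ∈ S}.ncard : ℝ) ≤ α * ((S.card : ℝ) - 1))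
    (B : V → V → ℕ)
    (hB0 : ∀ u v, ¬ G.Adj u v → B u v = 0)
    (hBγ : ∀ u v, G.Adj u v → B u v + B v u = γ)
    (load : V → ℕ) (hload : ∀ v, load v = ∑ u, B v u)
    (hvalid : ∀ u v, G.Adj u v → 1 ≤ B u v → (load u : ℝ) - (load v : ℝ) ≤ 1) :
    ∀ v, (load v : ℝ) ≤ (1 + ε) * α * γ + Real.logb (1 + ε) (Fintype.card V) := by
  classical
  intro v
  by_contra hcon
  push_neg at hcon
  have hε1 : (1:ℝ) < 1 + ε := by linarith
  have hγR : (1:ℝ) ≤ (γ:ℝ) := by exact_mod_cast hγ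
  have hαγ : (1:ℝ) ≤ α * γ := by nlinarith
  have hαγ0 : (0:ℝ) < α * γ := by linarith
  set c : ℝ := (1 + ε) * α * γ with hcdef
  have hc1 : (1:ℝ) < c := by nlinarith
  have hn1 : (1:ℝ) ≤ (Fintype.card V : ℝ) := by exact_mod_cast le_trans (by norm_num) hn
  have hlog0 : 0 ≤ Real.logb (1+ε) (Fintype.card V) := Real.logb_nonneg hε1 hn1
  set L : ℕ := load v with hL
  have hLc : c < (L:ℝ) := by linarith
  set S : ℕ → Finset V := fun i => Finset.univ.filter (fun u => L ≤ load u + i) with hS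
  have hvS : ∀ i, v ∈ S i := by
    intro i
    simp only [hS, Finset.mem_filter, Finset.mem_univ, true_and, ← hL]
    omega
  have hSmono : ∀ i, S i ⊆ S (i+1) := by
    intro i u
    simp only [hS, Finset.mem_filter, Finset.mem_univ, true_and]
    omega
  -- key growth inequality
  have key : ∀ i : ℕ, c ≤ (L:ℝ) - i → (1+ε) * ((S i).card : ℝ) ≤ ((S (i+1)).card : ℝ) := by
    intro i hci
    have hLi2 : i + 2 ≤ L := by
      have h1 : ((i:ℝ) + 1) < (L:ℝ) := by linarith
      have h2 : i + 1 < L := by exact_mod_cast h1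
      omega
    set T : Finset V := S (i+1) with hT
    have h1 : ∀ u, u ∈ S i → ∀ w, B u w ≠ 0 → G.Adj u w ∧ w ∈ T := by
      intro u hu w hw
      have hadj : G.Adj u w := by
        by_contra h
        exact hw (hB0 u w h)
      have hval := hvalid u w hadj (Nat.one_le_iff_ne_zero.mpr hw)
      have hu' : L ≤ load u + i := by
        simpa only [hS, Finset.mem_filter, Finset.mem_univ, true_and] using hu
      refine ⟨hadj, ?_⟩
      simp only [hT, hS, Finset.mem_filter, Finset.mem_univ, true_and]
      have hu'' : (L:ℝ) ≤ (load u : ℝ) + i := by exact_mod_cast hu'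
      have : (L:ℝ) ≤ (load w : ℝ) + (i+1) := by linarith
      exact_mod_cast this
    -- T has at least 2 elements
    obtain ⟨w, -, hw⟩ := Finset.exists_ne_zero_of_sum_ne_zero
      (show ∑ u, B v u ≠ 0 by rw [← hload v, ← hL]; omega)
    obtain ⟨hadjvw, hwT⟩ := h1 v (hvS i) w hw
    have hT2 : 2 ≤ T.card := by
      have hsub : ({v, w} : Finset V) ⊆ T := by
        intro x hx
        rcases Finset.mem_insert.mp hx with rfl | hx
        · exact hvS (i+1)
        · rw [Finset.mem_singleton] at hx; subst hx; exact hwT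
      calc 2 = ({v, w} : Finset V).card := (Finset.card_pair hadjvw.ne).symm
        _ ≤ T.card := Finset.card_le_card hsub
    -- edge counting
    set Ef : Finset (Sym2 V) :=
      Finset.univ.filter (fun e : Sym2 V => e ∈ G.edgeSet ∧ ∀ x ∈ e, x ∈ T) with hEf
    have hEset : {e : Sym2 V | e ∈ G.edgeSet ∧ ∀ x ∈ e, x ∈ T} = ↑Ef := by
      ext e; simp [hEf]
    have hE : ((Ef.card : ℕ) : ℝ) ≤ α * ((T.card : ℝ) - 1) := by
      have := harb T hT2
      rwa [hEset, Set.ncard_coe_finset] at this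
    set P : Finset (V × V) := (T ×ˢ T).filter (fun p => G.Adj p.1 p.2) with hP
    have hAT : S i ⊆ T := hSmono i
    have hsum1 : ∑ u ∈ S i, load u ≤ ∑ p ∈ P, B p.1 p.2 := by
      have hsub : ((S i) ×ˢ (Finset.univ : Finset V)).filter (fun p => B p.1 p.2 ≠ 0) ⊆ P := by
        intro p hp
        simp only [Finset.mem_filter, Finset.mem_product, Finset.mem_univ, and_true] at hp
        obtain ⟨hp1, hpB⟩ := hp
        obtain ⟨hadj, hpT⟩ := h1 p.1 hp1 p.2 hpB
        simp only [hP, Finset.mem_filter, Finset.mem_product]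
        exact ⟨⟨hAT hp1, hpT⟩, hadj⟩
      calc ∑ u ∈ S i, load u = ∑ u ∈ S i, ∑ w, B u w :=
            Finset.sum_congr rfl (fun u _ => hload u)
        _ = ∑ p ∈ (S i) ×ˢ (Finset.univ : Finset V), B p.1 p.2 := by
            rw [Finset.sum_product]
        _ = ∑ p ∈ ((S i) ×ˢ (Finset.univ : Finset V)).filter (fun p => B p.1 p.2 ≠ 0),
              B p.1 p.2 := (Finset.sum_filter_ne_zero _).symm
        _ ≤ ∑ p ∈ P, B p.1 p.2 := Finset.sum_le_sum_of_subset hsub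
    have hmaps : ∀ p ∈ P, Sym2.mk p.1 p.2 ∈ Ef := by
      rintro ⟨a, b⟩ hp
      simp only [hP, Finset.mem_filter, Finset.mem_product] at hp
      obtain ⟨⟨ha, hb⟩, hadj⟩ := hp
      simp only [hEf, Finset.mem_filter, Finset.mem_univ, true_and]
      constructor
      · exact hadj
      · intro x hx
        rcases Sym2.mem_iff.mp hx with rfl | rfl
        · exact ha
        · exact hb
    have hfiber : ∀ e ∈ Ef, (∑ p ∈ P.filter (fun p => Sym2.mk p.1 p.2 = e), B p.1 p.2) = γ := by
      intro e
      induction e using Sym2.inductionOn with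
      | _ x y =>
        intro he
        simp only [hEf, Finset.mem_filter, Finset.mem_univ, true_and,
          SimpleGraph.mem_edgeSet] at he
        obtain ⟨hxy, hmem⟩ := he
        have hxT : x ∈ T := hmem x (Sym2.mem_mk_left x y)
        have hyT : y ∈ T := hmem y (Sym2.mem_mk_right x y)
        have hset : P.filter (fun p => Sym2.mk p.1 p.2 = s(x, y)) = {(x, y), (y, x)} := by
          ext ⟨a, b⟩
          simp only [hP, Finset.mem_filter, Finset.mem_product, Finset.mem_insert,
            Finset.mem_singleton, Prod.mk.injEq]
          constructor
          · rintro ⟨⟨⟨haT, hbT⟩, hadj⟩, heq⟩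
            have : a = x ∧ b = y ∨ a = y ∧ b = x := Sym2.eq_iff.mp heq
            tauto
          · rintro (⟨rfl, rfl⟩ | ⟨rfl, rfl⟩)
            · exact ⟨⟨⟨hxT, hyT⟩, hxy⟩, rfl⟩
            · exact ⟨⟨⟨hyT, hxT⟩, hxy.symm⟩, Sym2.eq_swap⟩
        rw [hset, Finset.sum_pair (by simp [Prod.ext_iff]; intro h; exact absurd h hxy.ne)]
        exact hBγ x y hxy
    have hsum2 : ∑ p ∈ P, B p.1 p.2 = γ * Ef.card := by
      rw [← Finset.sum_fiberwise_of_maps_to hmaps (fun p => B p.1 p.2)]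
      rw [Finset.sum_congr rfl hfiber, Finset.sum_const, smul_eq_mul, mul_comm]
    have hnat : ∑ u ∈ S i, load u ≤ γ * Ef.card := hsum1.trans (le_of_eq hsum2)
    -- real arithmetic
    have hreal1 : ((L:ℝ) - i) * ((S i).card : ℝ) ≤ ∑ u ∈ S i, (load u : ℝ) := by
      have hb : ∀ u ∈ S i, (L:ℝ) - i ≤ (load u : ℝ) := by
        intro u hu
        simp only [hS, Finset.mem_filter, Finset.mem_univ, true_and] at hu
        have : (L:ℝ) ≤ (load u : ℝ) + i := by exact_mod_cast hu
        linarith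
      calc ((L:ℝ) - i) * ((S i).card : ℝ) = ∑ _u ∈ S i, ((L:ℝ) - i) := by
            rw [Finset.sum_const, nsmul_eq_mul, mul_comm]
        _ ≤ ∑ u ∈ S i, (load u : ℝ) := Finset.sum_le_sum hb
    have hreal2 : (∑ u ∈ S i, (load u : ℝ)) ≤ (γ:ℝ) * (α * ((T.card : ℝ) - 1)) := by
      have h1' : (∑ u ∈ S i, (load u : ℝ)) ≤ (γ:ℝ) * (Ef.card : ℝ) := by
        have h := (Nat.cast_le (α := ℝ)).mpr hnat
        push_cast at h
        exact h
      have h2' : (γ:ℝ) * (Ef.card : ℝ) ≤ (γ:ℝ) * (α * ((T.card : ℝ) - 1)) := by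
        apply mul_le_mul_of_nonneg_left hE (by linarith)
      linarith
    have hcomb : c * ((S i).card : ℝ) ≤ (γ:ℝ) * (α * ((T.card : ℝ) - 1)) := by
      have hx : c * ((S i).card : ℝ) ≤ ((L:ℝ) - i) * ((S i).card : ℝ) :=
        mul_le_mul_of_nonneg_right hci (Nat.cast_nonneg _)
      linarith
    have hdiv : (1+ε) * ((S i).card : ℝ) ≤ (T.card : ℝ) - 1 := by
      have h2 : (α * γ) * ((1+ε) * ((S i).card : ℝ)) ≤ (α * γ) * ((T.card : ℝ) - 1) := by
        have : c * ((S i).card : ℝ) = (α * γ) * ((1+ε) * ((S i).card : ℝ)) := by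
          rw [hcdef]; ring
        rw [this] at hcomb
        calc (α * γ) * ((1+ε) * ((S i).card : ℝ)) ≤ (γ:ℝ) * (α * ((T.card : ℝ) - 1)) := hcomb
          _ = (α * γ) * ((T.card : ℝ) - 1) := by ring
      exact le_of_mul_le_mul_left h2 hαγ0
    have : ((T.card : ℝ) - 1) ≤ (T.card : ℝ) := by linarith
    linarith
  -- growth by induction
  have grow : ∀ i : ℕ, c ≤ (L:ℝ) - i + 1 → (1+ε)^i ≤ ((S i).card : ℝ) := by
    intro i
    induction i with
    | zero =>
      intro _
      have : 1 ≤ (S 0).card := Finset.card_pos.mpr ⟨v, hvS 0⟩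
      simpa using (by exact_mod_cast this : (1:ℝ) ≤ ((S 0).card : ℝ))
    | succ i ih =>
      intro hcond
      have hci : c ≤ (L:ℝ) - i := by push_cast at hcond ⊢; linarith
      have h1 := ih (by linarith)
      have h2 := key i hci
      calc (1+ε)^(i+1) = (1+ε) * (1+ε)^i := by ring
        _ ≤ (1+ε) * ((S i).card : ℝ) := by
            apply mul_le_mul_of_nonneg_left h1 (by linarith)
        _ ≤ ((S (i+1)).card : ℝ) := h2
  -- conclusion
  have hceil : ⌈c⌉₊ ≤ L := Nat.ceil_le.mpr hLc.le
  set m : ℕ := L + 1 - ⌈c⌉₊ with hm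
  have hm' : (m:ℝ) = (L:ℝ) + 1 - (⌈c⌉₊ : ℝ) := by
    rw [hm]
    push_cast [Nat.cast_sub (by omega : ⌈c⌉₊ ≤ L + 1)]
    ring
  have hcond : c ≤ (L:ℝ) - m + 1 := by
    have := Nat.le_ceil c
    rw [hm']
    linarith
  have hg := grow m hcond
  have hub : ((S m).card : ℝ) ≤ (Fintype.card V : ℝ) := by
    exact_mod_cast Finset.card_le_univ (S m)
  have hml : Real.logb (1+ε) (Fintype.card V) < (m:ℝ) := by
    have hceil' : (⌈c⌉₊:ℝ) < c + 1 := Nat.ceil_lt_add_one (by linarith)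
    rw [hm']
    linarith
  have h0n : (0:ℝ) < (Fintype.card V : ℝ) := by linarith
  have hngt : (Fintype.card V : ℝ) < (1+ε)^m := by
    have hrb := Real.rpow_logb (by linarith : (0:ℝ) < 1+ε) (by linarith : (1+ε) ≠ 1) h0n
    rw [← hrb, ← Real.rpow_natCast (1+ε) m]
    exact (Real.rpow_lt_rpow_left_iff hε1).mpr hml
  linarith
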